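/- Let u, v ∈ A₁ with u' ≠ α v' in the sense that u' and v' are not a.e. proportional. Then F((u+v)/2)^{1/p} < ½ F(u)^{1/p} + ½ F(v)^{1/p}, where F(w) = ∫₀¹ |w'|₂^p. -/

import Mathlib

open MeasureTheory Set

/-- `u` lies in `W^{1,p}((0,1))` with weak derivative `u'`, represented by its
continuous (absolutely continuous) representative. -/
def IsW1p (p : ℝ) (u u' : ℝ → ℝ) : Prop :=
  MemLp u (ENNReal.ofReal p) (volume.restrict (Ioo (0:ℝ) 1)) ∧
  MemLp u' (ENNReal.ofReal p) (volume.restrict (Ioo (0:ℝ) 1)) ∧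
  ContinuousOn u (Icc (0:ℝ) 1) ∧
  ∀ x ∈ Icc (0:ℝ) 1, u x = u 0 + ∫ t in (0:ℝ)..x, u' t

/-- Membership in the constraint set `A₁`. -/
def MemA1 (p : ℝ) (u₁ u₂ u₁' u₂' : ℝ → ℝ) : Prop :=
  IsW1p p u₁ u₁' ∧ IsW1p p u₂ u₂' ∧
  (∀ᵐ x ∂(volume.restrict (Ioo (0:ℝ) 1)), (u₁ x) ^ 2 + (u₂ x) ^ 2 = 1) ∧
  u₁ 0 = 0 ∧ u₂ 0 = 1 ∧ u₁ 1 = 1 ∧ u₂ 1 = 0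

/-- The functional `F`, expressed through the weak derivatives. -/
noncomputable def FF (p : ℝ) (u₁' u₂' : ℝ → ℝ) : ℝ :=
  ∫ x in Ioo (0:ℝ) 1, ((u₁' x) ^ 2 + (u₂' x) ^ 2) ^ (p / 2)


noncomputable section SC
abbrev SCE := EuclideanSpace ℝ (Fin 2)

noncomputable def scPair (a b : ℝ) : SCE :=
  a • EuclideanSpace.single 0 1 + b • EuclideanSpace.single 1 1

lemma scPair_apply0 (a b : ℝ) : scPair a b 0 = a := by
  simp [scPair, EuclideanSpace.single_apply]

lemma scPair_apply1 (a b : ℝ) : scPair a b 1 = b := by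
  simp [scPair, EuclideanSpace.single_apply]

lemma scPair_add (a b c d : ℝ) : scPair (a+c) (b+d) = scPair a b + scPair c d := by
  simp only [scPair]; module

lemma scPair_smul (t a b : ℝ) : scPair (t*a) (t*b) = t • scPair a b := by
  simp only [scPair]; module

lemma sc_add_rpow_le_rpow_add {x y q : ℝ} (hx : 0 ≤ x) (hy : 0 ≤ y) (hq : 1 ≤ q) :
    x ^ q + y ^ q ≤ (x + y) ^ q := by
  have h := NNReal.add_rpow_le_rpow_add x.toNNReal y.toNNReal hq
  have h2 := (NNReal.coe_le_coe).2 h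
  push_cast at h2
  rwa [Real.coe_toNNReal x hx, Real.coe_toNNReal y hy] at h2

lemma sc_rpow_add_le {x y q : ℝ} (hx : 0 ≤ x) (hy : 0 ≤ y) (hq : 1 ≤ q) :
    (x + y) ^ q ≤ 2 ^ (q - 1) * (x ^ q + y ^ q) := by
  have h := NNReal.rpow_add_le_mul_rpow_add_rpow x.toNNReal y.toNNReal hq
  have h2 := (NNReal.coe_le_coe).2 h
  push_cast at h2
  rwa [Real.coe_toNNReal x hx, Real.coe_toNNReal y hy] at h2

lemma sc_sq_rpow {t : ℝ} (ht : 0 ≤ t) (q : ℝ) : (t ^ 2) ^ q = t ^ (2 * q) := by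
  rw [← Real.rpow_natCast t 2, ← Real.rpow_mul ht]
  norm_num

lemma sc_clarkson_point (p : ℝ) (hp : 2 ≤ p) (x y : SCE) :
    ‖x + y‖ ^ p + ‖x - y‖ ^ p ≤ 2 ^ (p - 1) * (‖x‖ ^ p + ‖y‖ ^ p) := by
  have hq : 1 ≤ p / 2 := by linarith
  have par : ‖x+y‖^2 + ‖x-y‖^2 = 2*(‖x‖^2+‖y‖^2) := by
    have := parallelogram_law_with_norm ℝ x y; ring_nf at this ⊢; linarith
  have e1 : ‖x+y‖ ^ p = (‖x+y‖^2)^(p/2) := by rw [sc_sq_rpow (norm_nonneg _)]; ring_nf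
  have e2 : ‖x-y‖ ^ p = (‖x-y‖^2)^(p/2) := by rw [sc_sq_rpow (norm_nonneg _)]; ring_nf
  have e3 : ‖x‖ ^ p = (‖x‖^2)^(p/2) := by rw [sc_sq_rpow (norm_nonneg _)]; ring_nf
  have e4 : ‖y‖ ^ p = (‖y‖^2)^(p/2) := by rw [sc_sq_rpow (norm_nonneg _)]; ring_nf
  rw [e1, e2, e3, e4]
  calc (‖x+y‖^2)^(p/2) + (‖x-y‖^2)^(p/2)
      ≤ (‖x+y‖^2 + ‖x-y‖^2)^(p/2) :=
        sc_add_rpow_le_rpow_add (by positivity) (by positivity) hq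
    _ = (2*(‖x‖^2+‖y‖^2))^(p/2) := by rw [par]
    _ = 2^(p/2) * (‖x‖^2+‖y‖^2)^(p/2) := Real.mul_rpow (by norm_num) (by positivity)
    _ ≤ 2^(p/2) * (2^(p/2-1) * ((‖x‖^2)^(p/2)+(‖y‖^2)^(p/2))) := by
        gcongr
        exact sc_rpow_add_le (by positivity) (by positivity) hq
    _ = 2^(p-1) * ((‖x‖^2)^(p/2) + (‖y‖^2)^(p/2)) := by
        rw [← mul_assoc, ← Real.rpow_add (by norm_num : (0:ℝ) < 2)]
        ring_nf

lemma sc_norm_pair (a b : ℝ) : ‖scPair a b‖ = Real.sqrt (a^2 + b^2) := by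
  rw [EuclideanSpace.norm_eq (scPair a b)]
  rw [Fin.sum_univ_two, scPair_apply0, scPair_apply1]
  simp [Real.norm_eq_abs, sq_abs]

lemma sc_norm_pair_rpow (p : ℝ) (a b : ℝ) : ‖scPair a b‖ ^ p = (a^2+b^2)^(p/2) := by
  rw [sc_norm_pair, Real.sqrt_eq_rpow, ← Real.rpow_mul (by positivity)]
  rw [show (1/2)*p = p/2 by ring]

abbrev scμ : Measure ℝ := volume.restrict (Ioo (0:ℝ) 1)

lemma sc_memLp_pair {P : ENNReal} {a b : ℝ → ℝ} (ha : MemLp a P scμ) (hb : MemLp b P scμ) :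
    MemLp (fun x => scPair (a x) (b x)) P scμ := by
  have h1 := (ContinuousLinearMap.toSpanSingleton ℝ
      (EuclideanSpace.single 0 (1:ℝ) : SCE)).comp_memLp' ha
  have h2 := (ContinuousLinearMap.toSpanSingleton ℝ
      (EuclideanSpace.single 1 (1:ℝ) : SCE)).comp_memLp' hb
  exact h1.add h2

section Nlem
variable {p : ℝ} (hp : 2 ≤ p)

lemma sc_hp0 : 2 ≤ p → 0 < p := fun h => lt_of_lt_of_le two_pos h
lemma sc_hPne : 2 ≤ p → ENNReal.ofReal p ≠ 0 := by
  intro h; simp only [ne_eq, ENNReal.ofReal_eq_zero, not_le]; linarith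

-- toReal of exponent
lemma sc_toReal : 2 ≤ p → (ENNReal.ofReal p).toReal = p := fun h =>
  ENNReal.toReal_ofReal (by linarith)

-- integrability of ‖f‖^p
lemma sc_int_norm {f : ℝ → SCE} (hf : MemLp f (ENNReal.ofReal p) scμ) (hp : 2 ≤ p) :
    Integrable (fun x => ‖f x‖ ^ p) scμ := by
  have := hf.integrable_norm_rpow (sc_hPne hp) ENNReal.ofReal_ne_top
  rwa [sc_toReal hp] at this

-- eLpNorm formula
lemma sc_eLp {f : ℝ → SCE} (hf : MemLp f (ENNReal.ofReal p) scμ) (hp : 2 ≤ p) :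
    eLpNorm f (ENNReal.ofReal p) scμ
      = ENNReal.ofReal ((∫ x in Ioo (0:ℝ) 1, ‖f x‖ ^ p) ^ (1/p)) := by
  rw [hf.eLpNorm_eq_integral_rpow_norm (sc_hPne hp) ENNReal.ofReal_ne_top, sc_toReal hp, one_div]

-- Minkowski
lemma sc_minkowski {f g : ℝ → SCE} (hp : 2 ≤ p)
    (hf : MemLp f (ENNReal.ofReal p) scμ) (hg : MemLp g (ENNReal.ofReal p) scμ) :
    (∫ x in Ioo (0:ℝ) 1, ‖f x + g x‖ ^ p) ^ (1/p)
      ≤ (∫ x in Ioo (0:ℝ) 1, ‖f x‖ ^ p) ^ (1/p) + (∫ x in Ioo (0:ℝ) 1, ‖g x‖ ^ p) ^ (1/p) := by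
  have key := eLpNorm_add_le hf.aestronglyMeasurable hg.aestronglyMeasurable
    (by rw [ENNReal.one_le_ofReal]; linarith : 1 ≤ ENNReal.ofReal p)
  rw [sc_eLp hf hp, sc_eLp hg hp, sc_eLp (hf.add hg) hp] at key
  have hB : (0:ℝ) ≤ (∫ x in Ioo (0:ℝ) 1, ‖f x‖ ^ p) ^ (1/p) := by positivity
  have hC : (0:ℝ) ≤ (∫ x in Ioo (0:ℝ) 1, ‖g x‖ ^ p) ^ (1/p) := by positivity
  rw [← ENNReal.ofReal_add hB hC, ENNReal.ofReal_le_ofReal_iff (by linarith)] at key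
  simpa only [Pi.add_apply] using key

-- scaling
lemma sc_I_smul (hp : 2 ≤ p) (c : ℝ) (f : ℝ → SCE) :
    ∫ x in Ioo (0:ℝ) 1, ‖c • f x‖ ^ p = |c| ^ p * ∫ x in Ioo (0:ℝ) 1, ‖f x‖ ^ p := by
  simp_rw [norm_smul, Real.norm_eq_abs,
    Real.mul_rpow (abs_nonneg c) (norm_nonneg _)]
  exact integral_const_mul _ _

lemma sc_N_smul (hp : 2 ≤ p) (c : ℝ) (f : ℝ → SCE) :
    (∫ x in Ioo (0:ℝ) 1, ‖c • f x‖ ^ p) ^ (1/p)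
      = |c| * (∫ x in Ioo (0:ℝ) 1, ‖f x‖ ^ p) ^ (1/p) := by
  have hp0 := sc_hp0 (p := p) hp
  rw [sc_I_smul hp, Real.mul_rpow (by positivity) (by positivity),
    ← Real.rpow_mul (abs_nonneg c), mul_one_div, div_self hp0.ne', Real.rpow_one]

-- I = 0 implies a.e. zero
lemma sc_I_zero {f : ℝ → SCE} (hp : 2 ≤ p) (hf : MemLp f (ENNReal.ofReal p) scμ)
    (hI : ∫ x in Ioo (0:ℝ) 1, ‖f x‖ ^ p = 0) : f =ᵐ[scμ] 0 := by
  have hint := sc_int_norm hf hp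
  have h0 := (integral_eq_zero_iff_of_nonneg (fun x => by positivity) hint).1 hI
  filter_upwards [h0] with x hx
  have : ‖f x‖ ^ p = 0 := hx
  by_contra hne
  have h1 : 0 < ‖f x‖ := by
    rcases (norm_nonneg (f x)).lt_or_eq with h | h
    · exact h
    · exact absurd (norm_eq_zero.1 h.symm) (by simpa using hne)
  exact absurd this (by positivity)

end Nlem

set_option maxHeartbeats 1000000 in
theorem sc_strict_triangle (hp : 2 ≤ p) (f g : ℝ → SCE)
    (hf : MemLp f (ENNReal.ofReal p) scμ) (hg : MemLp g (ENNReal.ofReal p) scμ)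
    (hf0 : ¬ f =ᵐ[scμ] 0) (hg0 : ¬ g =ᵐ[scμ] 0)
    (hnp : ∀ α : ℝ, ¬ g =ᵐ[scμ] (fun x => α • f x)) :
    (∫ x in Ioo (0:ℝ) 1, ‖f x + g x‖ ^ p) ^ (1/p)
      < (∫ x in Ioo (0:ℝ) 1, ‖f x‖ ^ p) ^ (1/p) + (∫ x in Ioo (0:ℝ) 1, ‖g x‖ ^ p) ^ (1/p) := by
  have hp0 : 0 < p := by linarith
  set If := ∫ x in Ioo (0:ℝ) 1, ‖f x‖ ^ p with hIf
  set Ig := ∫ x in Ioo (0:ℝ) 1, ‖g x‖ ^ p with hIg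
  have hIfnn : 0 ≤ If := integral_nonneg fun x => by positivity
  have hIgnn : 0 ≤ Ig := integral_nonneg fun x => by positivity
  have hIfpos : 0 < If := by
    rcases hIfnn.lt_or_eq with h | h
    · exact h
    · exact absurd (sc_I_zero hp hf h.symm) hf0
  have hIgpos : 0 < Ig := by
    rcases hIgnn.lt_or_eq with h | h
    · exact h
    · exact absurd (sc_I_zero hp hg h.symm) hg0
  set a := If ^ (1/p) with ha
  set b := Ig ^ (1/p) with hb
  have hapos : 0 < a := Real.rpow_pos_of_pos hIfpos _
  have hbpos : 0 < b := Real.rpow_pos_of_pos hIgpos _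
  have hIfa : If = a ^ p := by
    rw [ha, ← Real.rpow_mul hIfnn, one_div, inv_mul_cancel₀ hp0.ne', Real.rpow_one]
  have hIgb : Ig = b ^ p := by
    rw [hb, ← Real.rpow_mul hIgnn, one_div, inv_mul_cancel₀ hp0.ne', Real.rpow_one]
  -- normalized functions
  set F := fun x => a⁻¹ • f x with hF
  set G := fun x => b⁻¹ • g x with hG
  have hFm : MemLp F (ENNReal.ofReal p) scμ := hf.const_smul a⁻¹
  have hGm : MemLp G (ENNReal.ofReal p) scμ := hg.const_smul b⁻¹
  have hIF : ∫ x in Ioo (0:ℝ) 1, ‖F x‖ ^ p = 1 := by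
    rw [hF]
    rw [sc_I_smul hp a⁻¹ f, ← hIf, hIfa, abs_of_nonneg (by positivity),
      ← Real.mul_rpow (by positivity) (by positivity), inv_mul_cancel₀ hapos.ne',
      Real.one_rpow]
  have hIG : ∫ x in Ioo (0:ℝ) 1, ‖G x‖ ^ p = 1 := by
    rw [hG]
    rw [sc_I_smul hp b⁻¹ g, ← hIg, hIgb, abs_of_nonneg (by positivity),
      ← Real.mul_rpow (by positivity) (by positivity), inv_mul_cancel₀ hbpos.ne',
      Real.one_rpow]
  -- D > 0
  have hD : 0 < ∫ x in Ioo (0:ℝ) 1, ‖F x - G x‖ ^ p := by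
    have hnn : 0 ≤ ∫ x in Ioo (0:ℝ) 1, ‖F x - G x‖ ^ p :=
      integral_nonneg fun x => by positivity
    rcases hnn.lt_or_eq with h | h
    · exact h
    · exfalso
      have hmem : MemLp (fun x => F x - G x) (ENNReal.ofReal p) scμ := hFm.sub hGm
      have h0 := sc_I_zero hp hmem h.symm
      apply hnp (b * a⁻¹)
      filter_upwards [h0] with x hx
      have hx' : F x - G x = 0 := hx
      have : b⁻¹ • g x = a⁻¹ • f x := by
        rw [hF, hG] at hx'; simp only at hx'
        rw [sub_eq_zero] at hx'; exact hx'.symm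
      have h2 := congrArg (fun v => b • v) this
      simp only [smul_smul, mul_inv_cancel₀ hbpos.ne', one_smul] at h2
      exact h2
  -- Clarkson integral
  have hclark : (∫ x in Ioo (0:ℝ) 1, ‖F x + G x‖ ^ p)
      + (∫ x in Ioo (0:ℝ) 1, ‖F x - G x‖ ^ p) ≤ 2 ^ p := by
    have i1 : Integrable (fun x => ‖F x + G x‖ ^ p) scμ := by
      have := sc_int_norm (hFm.add hGm) hp
      simpa only [Pi.add_apply] using this
    have i2 : Integrable (fun x => ‖F x - G x‖ ^ p) scμ := sc_int_norm (hFm.sub hGm) hp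
    have i3 : Integrable (fun x => ‖F x‖ ^ p) scμ := sc_int_norm hFm hp
    have i4 : Integrable (fun x => ‖G x‖ ^ p) scμ := sc_int_norm hGm hp
    calc (∫ x in Ioo (0:ℝ) 1, ‖F x + G x‖ ^ p) + ∫ x in Ioo (0:ℝ) 1, ‖F x - G x‖ ^ p
        = ∫ x in Ioo (0:ℝ) 1, (‖F x + G x‖ ^ p + ‖F x - G x‖ ^ p) := (integral_add i1 i2).symm
      _ ≤ ∫ x in Ioo (0:ℝ) 1, 2 ^ (p-1) * (‖F x‖ ^ p + ‖G x‖ ^ p) := by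
          refine integral_mono (i1.add i2) (((i3.add i4)).const_mul _) ?_
          intro x; exact sc_clarkson_point p hp (F x) (G x)
      _ = 2 ^ (p-1) * ((∫ x in Ioo (0:ℝ) 1, ‖F x‖ ^ p) + ∫ x in Ioo (0:ℝ) 1, ‖G x‖ ^ p) := by
          rw [integral_const_mul, integral_add i3 i4]
      _ = 2 ^ p := by
          rw [hIF, hIG]
          rw [show (2:ℝ)^(p-1) * (1+1) = 2^(p-1) * 2^(1:ℝ) by norm_num,
            ← Real.rpow_add (by norm_num : (0:ℝ) < 2)]
          norm_num
  have hFGlt : (∫ x in Ioo (0:ℝ) 1, ‖F x + G x‖ ^ p) ^ (1/p) < 2 := by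
    have h1 : (∫ x in Ioo (0:ℝ) 1, ‖F x + G x‖ ^ p) < 2 ^ p := by linarith
    have h2 : ((∫ x in Ioo (0:ℝ) 1, ‖F x + G x‖ ^ p)) ^ (1/p) < (2 ^ p) ^ (1/p) :=
      Real.rpow_lt_rpow (integral_nonneg fun x => by positivity) h1 (by positivity)
    rwa [← Real.rpow_mul (by norm_num : (0:ℝ) ≤ 2), mul_one_div, div_self hp0.ne',
      Real.rpow_one] at h2
  -- midpoint of F G
  set M := fun x => (2:ℝ)⁻¹ • (F x + G x) with hM
  have hMm : MemLp M (ENNReal.ofReal p) scμ := by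
    have := (hFm.add hGm).const_smul (2:ℝ)⁻¹
    exact this
  have hNM : (∫ x in Ioo (0:ℝ) 1, ‖M x‖ ^ p) ^ (1/p) < 1 := by
    rw [hM]
    rw [sc_N_smul hp ((2:ℝ)⁻¹) (fun x => F x + G x)]
    rw [abs_of_nonneg (by norm_num : (0:ℝ) ≤ (2:ℝ)⁻¹)]
    linarith [hFGlt]
  -- lambda
  set l := a / (a + b) with hl
  have habpos : 0 < a + b := by linarith
  have hl0 : 0 < l := by positivity
  have hl1 : l < 1 := by
    rw [hl, div_lt_one habpos]; linarith
  -- w = l • F + (1-l) • G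
  set W := fun x => l • F x + (1 - l) • G x with hW
  have hfg_eq : ∀ x, f x + g x = (a + b) • W x := by
    intro x
    rw [hW, hF, hG]
    simp only [smul_add, smul_smul]
    rw [show (a+b) * (l * a⁻¹) = 1 by rw [hl]; field_simp,
      show (a+b) * ((1-l) * b⁻¹) = 1 by rw [hl]; field_simp; ring]
    simp
  have hNW : (∫ x in Ioo (0:ℝ) 1, ‖W x‖ ^ p) ^ (1/p) < 1 := by
    rcases le_total l 2⁻¹ with hc | hc
    · -- W = (2l) • M + (1-2l) • G
      have hWd : ∀ x, W x = (2*l) • M x + (1-2*l) • G x := by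
        intro x; rw [hW, hM]; module
      have step1 : (∫ x in Ioo (0:ℝ) 1, ‖W x‖ ^ p) ^ (1/p)
          ≤ (∫ x in Ioo (0:ℝ) 1, ‖(2*l) • M x‖ ^ p) ^ (1/p)
            + (∫ x in Ioo (0:ℝ) 1, ‖(1-2*l) • G x‖ ^ p) ^ (1/p) := by
        have := sc_minkowski hp (f := fun x => (2*l) • M x) (g := fun x => (1-2*l) • G x)
          (hMm.const_smul (2*l)) (hGm.const_smul (1-2*l))
        simp_rw [← hWd] at this
        exact this
      rw [sc_N_smul hp (2*l) M, sc_N_smul hp (1-2*l) G, hIG, Real.one_rpow,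
        abs_of_nonneg (by positivity), abs_of_nonneg (by linarith)] at step1
      calc (∫ x in Ioo (0:ℝ) 1, ‖W x‖ ^ p) ^ (1/p)
          ≤ 2*l * (∫ x in Ioo (0:ℝ) 1, ‖M x‖ ^ p) ^ (1/p) + (1-2*l) * 1 := step1
        _ < 2*l * 1 + (1-2*l) * 1 :=
            add_lt_add_of_lt_of_le (by exact mul_lt_mul_of_pos_left hNM (by linarith)) le_rfl
        _ = 1 := by ring
    · -- W = (2l-1) • F + (2-2l) • M
      have hWd : ∀ x, W x = (2*l-1) • F x + (2-2*l) • M x := by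
        intro x; rw [hW, hM]; module
      have step1 : (∫ x in Ioo (0:ℝ) 1, ‖W x‖ ^ p) ^ (1/p)
          ≤ (∫ x in Ioo (0:ℝ) 1, ‖(2*l-1) • F x‖ ^ p) ^ (1/p)
            + (∫ x in Ioo (0:ℝ) 1, ‖(2-2*l) • M x‖ ^ p) ^ (1/p) := by
        have := sc_minkowski hp (f := fun x => (2*l-1) • F x) (g := fun x => (2-2*l) • M x)
          (hFm.const_smul (2*l-1)) (hMm.const_smul (2-2*l))
        simp_rw [← hWd] at this
        exact this
      rw [sc_N_smul hp (2*l-1) F, sc_N_smul hp (2-2*l) M, hIF, Real.one_rpow,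
        abs_of_nonneg (by linarith), abs_of_nonneg (by linarith)] at step1
      calc (∫ x in Ioo (0:ℝ) 1, ‖W x‖ ^ p) ^ (1/p)
          ≤ (2*l-1) * 1 + (2-2*l) * (∫ x in Ioo (0:ℝ) 1, ‖M x‖ ^ p) ^ (1/p) := step1
        _ < (2*l-1) * 1 + (2-2*l) * 1 :=
            add_lt_add_of_le_of_lt le_rfl (by exact mul_lt_mul_of_pos_left hNM (by linarith))
        _ = 1 := by ring
  -- conclude
  calc (∫ x in Ioo (0:ℝ) 1, ‖f x + g x‖ ^ p) ^ (1/p)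
      = (∫ x in Ioo (0:ℝ) 1, ‖(a+b) • W x‖ ^ p) ^ (1/p) := by
        simp_rw [hfg_eq]
    _ = (a+b) * (∫ x in Ioo (0:ℝ) 1, ‖W x‖ ^ p) ^ (1/p) := by
        rw [sc_N_smul hp, abs_of_nonneg habpos.le]
    _ < (a+b) * 1 := mul_lt_mul_of_pos_left hNW habpos
    _ = a + b := by ring

lemma sc_deriv_ne_zero {p : ℝ} {w w' : ℝ → ℝ} (hw : IsW1p p w w')
    (h0 : w 0 = 0) (h1 : w 1 = 1) :
    ¬ (w' =ᵐ[volume.restrict (Ioo (0:ℝ) 1)] 0) := by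
  intro h
  have hw1 := hw.2.2.2 1 (by norm_num : (1:ℝ) ∈ Icc (0:ℝ) 1)
  have hres : volume.restrict (Ioo (0:ℝ) 1) = volume.restrict (Ioc (0:ℝ) 1) :=
    Measure.restrict_congr_set Ioo_ae_eq_Ioc
  have h' : w' =ᵐ[volume.restrict (Ioc (0:ℝ) 1)] 0 := hres ▸ h
  have hzero : ∫ t in (0:ℝ)..1, w' t = 0 := by
    rw [intervalIntegral.integral_of_le zero_le_one, integral_congr_ae h']
    simp
  rw [hzero, h0, h1] at hw1
  norm_num at hw1

end SC

theorem strict_convexity_at_nonproportional (p : ℝ) (hp : 2 ≤ p)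
    (u₁ u₂ v₁ v₂ u₁' u₂' v₁' v₂' : ℝ → ℝ)
    (hu : MemA1 p u₁ u₂ u₁' u₂') (hv : MemA1 p v₁ v₂ v₁' v₂')
    (hnp : ¬ ∃ α : ℝ, ∀ᵐ x ∂(volume.restrict (Ioo (0:ℝ) 1)),
      v₁' x = α * u₁' x ∧ v₂' x = α * u₂' x) :
    (FF p (fun x => (u₁' x + v₁' x) / 2) (fun x => (u₂' x + v₂' x) / 2)) ^ (1 / p)
      < (1 / 2) * (FF p u₁' u₂') ^ (1 / p) + (1 / 2) * (FF p v₁' v₂') ^ (1 / p) := by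

  classical
  have hp0 : 0 < p := by linarith
  obtain ⟨hu1, hu2, _, hu10, hu20, hu11, hu21⟩ := hu
  obtain ⟨hv1, hv2, _, hv10, hv20, hv11, hv21⟩ := hv
  set f := fun x => scPair (u₁' x) (u₂' x) with hfdef
  set g := fun x => scPair (v₁' x) (v₂' x) with hgdef
  have hfm : MemLp f (ENNReal.ofReal p) scμ := sc_memLp_pair hu1.2.1 hu2.2.1
  have hgm : MemLp g (ENNReal.ofReal p) scμ := sc_memLp_pair hv1.2.1 hv2.2.1
  have hFFu : FF p u₁' u₂' = ∫ x in Ioo (0:ℝ) 1, ‖f x‖ ^ p := by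
    simp only [FF, hfdef]
    refine integral_congr_ae (Filter.Eventually.of_forall fun x => ?_)
    simp only [sc_norm_pair_rpow]
  have hFFv : FF p v₁' v₂' = ∫ x in Ioo (0:ℝ) 1, ‖g x‖ ^ p := by
    simp only [FF, hgdef]
    refine integral_congr_ae (Filter.Eventually.of_forall fun x => ?_)
    simp only [sc_norm_pair_rpow]
  have hFFm : FF p (fun x => (u₁' x + v₁' x) / 2) (fun x => (u₂' x + v₂' x) / 2)
      = ∫ x in Ioo (0:ℝ) 1, ‖(2:ℝ)⁻¹ • (f x + g x)‖ ^ p := by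
    simp only [FF, hfdef, hgdef]
    refine integral_congr_ae (Filter.Eventually.of_forall fun x => ?_)
    simp only [← sc_norm_pair_rpow]
    congr 1
    rw [show (u₁' x + v₁' x)/2 = (2:ℝ)⁻¹ * (u₁' x + v₁' x) by ring,
      show (u₂' x + v₂' x)/2 = (2:ℝ)⁻¹ * (u₂' x + v₂' x) by ring,
      scPair_smul, scPair_add]
  have hf0 : ¬ f =ᵐ[scμ] 0 := by
    intro h
    apply sc_deriv_ne_zero hu1 hu10 hu11
    filter_upwards [h] with x hx
    have hx' : scPair (u₁' x) (u₂' x) = 0 := hx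
    have := congrArg (fun v : SCE => v 0) hx'
    simpa [scPair_apply0] using this
  have hg0 : ¬ g =ᵐ[scμ] 0 := by
    intro h
    apply sc_deriv_ne_zero hv1 hv10 hv11
    filter_upwards [h] with x hx
    have hx' : scPair (v₁' x) (v₂' x) = 0 := hx
    have := congrArg (fun v : SCE => v 0) hx'
    simpa [scPair_apply0] using this
  have hnp' : ∀ α : ℝ, ¬ g =ᵐ[scμ] (fun x => α • f x) := by
    intro α h
    apply hnp
    refine ⟨α, ?_⟩
    filter_upwards [h] with x hx
    have hx' : scPair (v₁' x) (v₂' x) = scPair (α * u₁' x) (α * u₂' x) := by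
      rw [scPair_smul]; exact hx
    constructor
    · have := congrArg (fun v : SCE => v 0) hx'
      simpa [scPair_apply0] using this
    · have := congrArg (fun v : SCE => v 1) hx'
      simpa [scPair_apply1] using this
  have hst := sc_strict_triangle hp f g hfm hgm hf0 hg0 hnp'
  rw [hFFu, hFFv, hFFm]
  rw [sc_N_smul hp ((2:ℝ)⁻¹) (fun x => f x + g x),
    abs_of_nonneg (by norm_num : (0:ℝ) ≤ (2:ℝ)⁻¹)]
  linarith
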